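/- Let a, b be coprime odd positive integers with a² + b² = 2c² for some integer c, and let n be a positive square-free integer. Then there are no coprime nonzero integers u, v with u/v ∉ {-2, -1/2, -1, 1, 0} and d ∈ ℤ such that d²u³(u+2v) = -a²n and d²v³(v+2u) = b²n. (Consequently the elliptic curve y² = x(x - a²n)(x + b²n) has no rational point of order 3.) -/
import Mathlib


/-- no point of order 3 (Ono's criterion data cannot exist). -/
theorem stmt2 (a b : ℕ) (c : ℤ) (ha : 0 < a) (hb : 0 < b)
    (haodd : Odd a) (hbodd : Odd b) (hab : Nat.gcd a b = 1)
    (h : (a : ℤ) ^ 2 + (b : ℤ) ^ 2 = 2 * c ^ 2)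
    (n : ℕ) (hn : 0 < n) (hsf : Squarefree n) :
    ¬ ∃ (d u v : ℤ), u ≠ 0 ∧ v ≠ 0 ∧ IsCoprime u v ∧
      u ≠ -2 * v ∧ 2 * u ≠ -v ∧ u ≠ -v ∧ u ≠ v ∧
      d ^ 2 * u ^ 3 * (u + 2 * v) = -(a : ℤ) ^ 2 * n ∧
      d ^ 2 * v ^ 3 * (v + 2 * u) = (b : ℤ) ^ 2 * n := by
  rintro ⟨d, u, v, hu0, hv0, hcopuv, -, -, -, -, h1, h2⟩
  have haZ : Odd (a : ℤ) := by exact_mod_cast haodd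
  have hbZ : Odd (b : ℤ) := by exact_mod_cast hbodd
  have hsfZ : Squarefree (n : ℤ) := Int.squarefree_natCast.mpr hsf
  have h2a : ¬ (2:ℤ) ∣ (a:ℤ) := by
    obtain ⟨k, hk⟩ := haZ; omega
  have h2b : ¬ (2:ℤ) ∣ (b:ℤ) := by
    obtain ⟨k, hk⟩ := hbZ; omega
  -- Lemma A : 4 cannot divide m^2 * n for m odd
  have lemA : ∀ m : ℤ, ¬ (2:ℤ) ∣ m → ¬ (4:ℤ) ∣ m ^ 2 * n := by
    intro m hm h4
    have h2' : (2:ℤ) ∣ m ^ 2 * n := dvd_trans ⟨2, by norm_num⟩ h4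
    have h2n : (2:ℤ) ∣ (n:ℤ) := by
      rcases Int.prime_two.dvd_mul.mp h2' with hh | hh
      · exact absurd (Int.prime_two.dvd_of_dvd_pow hh) hm
      · exact hh
    obtain ⟨k, hk⟩ := h2n
    have h44 : (2:ℤ) * 2 ∣ 2 * (m ^ 2 * k) := by
      have he : m ^ 2 * (n:ℤ) = 2 * (m ^ 2 * k) := by rw [hk]; ring
      rw [← he]
      have : (4:ℤ) = 2 * 2 := by norm_num
      rw [← this]; exact h4
    have h2k : (2:ℤ) ∣ m ^ 2 * k := (mul_dvd_mul_iff_left (two_ne_zero)).mp h44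
    have h2k' : (2:ℤ) ∣ k := by
      rcases Int.prime_two.dvd_mul.mp h2k with hh | hh
      · exact absurd (Int.prime_two.dvd_of_dvd_pow hh) hm
      · exact hh
    have hunit : IsUnit (2:ℤ) := hsfZ 2 (by obtain ⟨t, ht⟩ := h2k'; exact ⟨t, by rw [hk, ht]; ring⟩)
    rw [Int.isUnit_iff] at hunit
    omega
  -- d^2 = 1
  have ha2n : d ^ 2 ∣ (a:ℤ) ^ 2 * n := ⟨-(u ^ 3 * (u + 2 * v)), by linear_combination h1⟩
  have hb2n : d ^ 2 ∣ (b:ℤ) ^ 2 * n := ⟨v ^ 3 * (v + 2 * u), by linear_combination -h2⟩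
  have hdn : d ^ 2 ∣ (n:ℤ) := by
    have hc2 : IsCoprime ((a:ℤ) ^ 2) ((b:ℤ) ^ 2) :=
      IsCoprime.pow (Nat.isCoprime_iff_coprime.mpr hab)
    obtain ⟨x, y, hxy⟩ := hc2
    have hrw : (n:ℤ) = x * ((a:ℤ) ^ 2 * n) + y * ((b:ℤ) ^ 2 * n) := by
      linear_combination -(n:ℤ) * hxy
    rw [hrw]
    exact dvd_add (ha2n.mul_left x) (hb2n.mul_left y)
  have hd2 : d ^ 2 = 1 := by
    have hunit := hsfZ d (by rwa [← pow_two])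
    rcases Int.isUnit_iff.mp hunit with rfl | rfl <;> norm_num
  rw [hd2, one_mul] at h1 h2
  -- u and v are odd
  have hu : ¬ (2:ℤ) ∣ u := by
    rintro ⟨s, rfl⟩
    exact lemA a h2a ⟨-(2 * s ^ 3 * (2 * s + 2 * v)), by linear_combination h1⟩
  have hv : ¬ (2:ℤ) ∣ v := by
    rintro ⟨s, rfl⟩
    exact lemA b h2b ⟨2 * s ^ 3 * (2 * s + 2 * u), by linear_combination -h2⟩
  -- n is odd
  have hnodd : ¬ (2:ℤ) ∣ (n:ℤ) := by
    intro h2n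
    have hdv : (2:ℤ) ∣ u ^ 3 * (u + 2 * v) := by
      rw [h1]; exact h2n.mul_left _
    rcases Int.prime_two.dvd_mul.mp hdv with hh | hh
    · exact hu (Int.prime_two.dvd_of_dvd_pow hh)
    · exact hu (by omega)
  -- c is odd
  have hcodd : ¬ (2:ℤ) ∣ c := by
    rintro ⟨m, rfl⟩
    obtain ⟨k, hk⟩ := haodd
    obtain ⟨l, hl⟩ := hbodd
    have ha' : (a:ℤ) = 2 * k + 1 := by exact_mod_cast hk
    have hb' : (b:ℤ) = 2 * l + 1 := by exact_mod_cast hl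
    rw [ha', hb'] at h
    have h4 : (2:ℤ) = 4 * (2 * m ^ 2 - (k:ℤ) ^ 2 - k - l ^ 2 - l) := by
      linear_combination h
    have : (4:ℤ) ∣ 2 := ⟨_, h4⟩
    norm_num at this
  -- key identity
  have key : (v - u) * (u + v) ^ 3 = 2 * c ^ 2 * n := by
    linear_combination h2 - h1 + (n:ℤ) * h
  obtain ⟨s, hs⟩ : (2:ℤ) ∣ v - u := by omega
  obtain ⟨t, ht⟩ : (2:ℤ) ∣ u + v := by omega
  have h4 : (4:ℤ) ∣ 2 * c ^ 2 * n := ⟨4 * s * t ^ 3, by rw [← key, hs, ht]; ring⟩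
  obtain ⟨w, hw⟩ := h4
  have h2cn : (2:ℤ) * (c ^ 2 * n) = 2 * (2 * w) := by linear_combination hw
  have h2cn' : (c:ℤ) ^ 2 * n = 2 * w := mul_left_cancel₀ two_ne_zero h2cn
  rcases Int.prime_two.dvd_mul.mp ⟨w, h2cn'⟩ with hh | hh
  · exact hcodd (Int.prime_two.dvd_of_dvd_pow hh)
  · exact hnodd hh
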